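/- arXiv:2601.08453 — 3 statements merged into one kernel-verified Lean document; each statement's English description precedes it below -/
import Mathlib

section
/- Let m, r be positive integers and p a natural number with p ≥ r·m. Then S_r(p,m) ≥ p! · m^{p−rm} / (m! · (r!)^m · (p−rm)! · (r+1)^{p−rm}). -/
open Finset

namespace Stmt16Aux

theorem my_choose_le_pow (r : ℕ) : ∀ b, r ≤ b → Nat.choose b r ≤ (r + 1) ^ (b - r) := by
  rcases Nat.eq_zero_or_pos r with rfl | hr
  · intro b _; simp
  obtain ⟨q, rfl⟩ : ∃ q, r = q + 1 := ⟨r - 1, by omega⟩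
  intro b
  induction b with
  | zero => intro h; omega
  | succ b ih =>
    intro hrb
    rcases Nat.lt_or_ge b (q + 1) with hlt | hge
    · have : b = q := by omega
      subst this
      simp [Nat.choose_self]
    · have h1 : Nat.choose b q ≤ Nat.choose b (q + 1) * (q + 1) := by
        calc Nat.choose b q ≤ Nat.choose b q * (b - q) :=
              Nat.le_mul_of_pos_right _ (by omega)
          _ = Nat.choose b (q + 1) * (q + 1) := (Nat.choose_succ_right_eq b q).symm
      have h2 : Nat.choose (b + 1) (q + 1) ≤ (q + 2) * Nat.choose b (q + 1) := by
        rw [Nat.choose_succ_succ]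
        calc Nat.choose b q + Nat.choose b (q + 1)
            ≤ Nat.choose b (q + 1) * (q + 1) + Nat.choose b (q + 1) :=
              Nat.add_le_add_right h1 _
          _ = (q + 2) * Nat.choose b (q + 1) := by ring
      calc Nat.choose (b + 1) (q + 1) ≤ (q + 2) * Nat.choose b (q + 1) := h2
        _ ≤ (q + 2) * (q + 2) ^ (b - (q + 1)) := Nat.mul_le_mul_left _ (ih hge)
        _ = (q + 2) ^ (b - (q + 1) + 1) := (pow_succ' _ _).symm
        _ = (q + 2) ^ (b + 1 - (q + 1)) := by congr 1; omega

theorem my_descFactorial_le {r b : ℕ} (h : r ≤ b) :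
    b.descFactorial r ≤ r.factorial * (r + 1) ^ (b - r) := by
  rw [Nat.descFactorial_eq_factorial_mul_choose]
  exact Nat.mul_le_mul_left _ (my_choose_le_pow r b h)


variable {p m r : ℕ}

/-- position of the `a`-th base element of block `j` -/
def basePos (hr : 0 < r) (hp : r * m ≤ p) (j : Fin m) (a : Fin r) : Fin p :=
  ⟨r * j + a, by
    have hj := j.isLt; have ha := a.isLt
    have h1 : r * j + a < r * (j + 1) := by
      rw [Nat.mul_add, Nat.mul_one]; omega
    have h2 : r * (j + 1) ≤ r * m := Nat.mul_le_mul_left r (by omega)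
    omega⟩

/-- position of the `t`-th extra element -/
def extraPos (t : Fin (p - r * m)) : Fin p :=
  ⟨r * m + t, by have := t.isLt; omega⟩

theorem basePos_injective (hr : 0 < r) (hp : r * m ≤ p) :
    Function.Injective (fun q : Fin m × Fin r => basePos hr hp q.1 q.2) := by
  rintro ⟨j1, a1⟩ ⟨j2, a2⟩ h
  simp only [basePos, Fin.mk.injEq] at h
  have ha1 := a1.isLt; have ha2 := a2.isLt
  have hj : (j1 : ℕ) = j2 := by
    have e1 : (r * j1 + a1) / r = (j1 : ℕ) := by
      rw [Nat.mul_add_div hr]; simp [Nat.div_eq_of_lt ha1]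
    have e2 : (r * j2 + a2) / r = (j2 : ℕ) := by
      rw [Nat.mul_add_div hr]; simp [Nat.div_eq_of_lt ha2]
    rw [← e1, ← e2, h]
  have hrj : r * (j1 : ℕ) = r * (j2 : ℕ) := by rw [hj]
  have : (a1 : ℕ) = a2 := by omega
  simp [Prod.ext_iff, Fin.ext_iff, hj, this]

theorem basePos_lt (hr : 0 < r) (hp : r * m ≤ p) (j : Fin m) (a : Fin r) :
    ((basePos hr hp j a : Fin p) : ℕ) < r * m := by
  simp only [basePos]
  have hj := j.isLt; have ha := a.isLt
  have h1 : r * (j + 1) ≤ r * m := Nat.mul_le_mul_left r (by omega)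
  have h2 : r * j + a < r * (j + 1) := by rw [Nat.mul_add, Nat.mul_one]; omega
  omega

/-- label of a position: block index if it's a base position, otherwise given by `h`. -/
def lab (hr : 0 < r) (hm : 0 < m) (h : Fin (p - r * m) → Fin m) (t : Fin p) : Fin m :=
  if ht : (t : ℕ) < r * m then
    ⟨(t : ℕ) / r, by rw [Nat.div_lt_iff_lt_mul hr, Nat.mul_comm]; omega⟩
  else h ⟨(t : ℕ) - r * m, by have := t.isLt; omega⟩

theorem lab_basePos (hr : 0 < r) (hm : 0 < m) (hp : r * m ≤ p)
    (h : Fin (p - r * m) → Fin m) (j : Fin m) (a : Fin r) :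
    lab hr hm h (basePos hr hp j a) = j := by
  have hlt := basePos_lt hr hp j a
  rw [lab, dif_pos hlt]
  have ha := a.isLt
  apply Fin.ext
  show ((basePos hr hp j a : Fin p) : ℕ) / r = j
  simp only [basePos]
  rw [Nat.mul_add_div hr]
  simp [Nat.div_eq_of_lt ha]

theorem lab_extraPos (hr : 0 < r) (hm : 0 < m)
    (h : Fin (p - r * m) → Fin m) (t : Fin (p - r * m)) :
    lab hr hm h (extraPos t) = h t := by
  have : ¬ ((extraPos t : Fin p) : ℕ) < r * m := by simp [extraPos]
  rw [lab, dif_neg this]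
  congr 1
  apply Fin.ext
  simp [extraPos]

variable (p m r) in
/-- domain of the counting map -/
abbrev Dom := Equiv.Perm (Fin p) × (Fin (p - r * m) → Fin m)

/-- color of an element -/
def color (hr : 0 < r) (hm : 0 < m) (d : Dom p m r) (x : Fin p) : Fin m :=
  lab hr hm d.2 (d.1.symm x)

def fiber (hr : 0 < r) (hm : 0 < m) (d : Dom p m r) (j : Fin m) : Finset (Fin p) :=
  univ.filter (fun x => color hr hm d x = j)

theorem mem_fiber (hr : 0 < r) (hm : 0 < m) (d : Dom p m r) {j : Fin m} {x : Fin p} :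
    x ∈ fiber hr hm d j ↔ color hr hm d x = j := by
  simp [fiber]

theorem base_mem_fiber (hr : 0 < r) (hm : 0 < m) (hp : r * m ≤ p) (d : Dom p m r)
    (j : Fin m) (a : Fin r) : d.1 (basePos hr hp j a) ∈ fiber hr hm d j := by
  rw [mem_fiber, color, Equiv.symm_apply_apply, lab_basePos]

theorem extra_mem_fiber (hr : 0 < r) (hm : 0 < m) (d : Dom p m r)
    (t : Fin (p - r * m)) : d.1 (extraPos t) ∈ fiber hr hm d (d.2 t) := by
  rw [mem_fiber, color, Equiv.symm_apply_apply, lab_extraPos]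

theorem fiber_injective (hr : 0 < r) (hm : 0 < m) (hp : r * m ≤ p) (d : Dom p m r) :
    Function.Injective (fiber hr hm d) := by
  intro j1 j2 h
  have hx : d.1 (basePos hr hp j1 ⟨0, hr⟩) ∈ fiber hr hm d j2 := by
    rw [← h]; exact base_mem_fiber hr hm hp d j1 ⟨0, hr⟩
  have hx1 := base_mem_fiber hr hm hp d j1 ⟨0, hr⟩
  rw [mem_fiber] at hx hx1
  rw [← hx1, hx]

/-- the partition associated to `d` -/
def part (hr : 0 < r) (hm : 0 < m) (hp : r * m ≤ p) (d : Dom p m r) :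
    Finpartition (univ : Finset (Fin p)) where
  parts := univ.image (fiber hr hm d)
  supIndep := by
    rw [Finset.supIndep_iff_pairwiseDisjoint]
    intro s hs t ht hst
    simp only [coe_image, coe_univ, Set.image_univ, Set.mem_range] at hs ht
    obtain ⟨j1, rfl⟩ := hs; obtain ⟨j2, rfl⟩ := ht
    simp only [Function.onFun, id]
    rw [Finset.disjoint_left]
    intro x hx1 hx2
    rw [mem_fiber] at hx1 hx2
    exact hst (by rw [← hx1, hx2])
  sup_parts := by
    ext x
    simp only [Finset.sup_image, Finset.mem_sup, mem_univ, iff_true, true_and,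
      Function.comp, id_eq]
    exact ⟨color hr hm d x, (mem_fiber hr hm d).mpr rfl⟩
  bot_notMem := by
    simp only [bot_eq_empty, mem_image, mem_univ, true_and, not_exists]
    intro j h
    have := base_mem_fiber hr hm hp d j ⟨0, hr⟩
    rw [h] at this
    simp at this

theorem part_parts_card (hr : 0 < r) (hm : 0 < m) (hp : r * m ≤ p) (d : Dom p m r) :
    (part hr hm hp d).parts.card = m := by
  rw [part, Finset.card_image_of_injective _ (fiber_injective hr hm hp d)]
  simp

theorem part_parts_le (hr : 0 < r) (hm : 0 < m) (hp : r * m ≤ p) (d : Dom p m r) :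
    ∀ s ∈ (part hr hm hp d).parts, r ≤ s.card := by
  intro s hs
  simp only [part, mem_image, mem_univ, true_and] at hs
  obtain ⟨j, rfl⟩ := hs
  have h2 : (univ : Finset (Fin r)).card ≤ (fiber hr hm d j).card := by
    apply Finset.card_le_card_of_injOn (fun a => d.1 (basePos hr hp j a))
    · intro a _; exact base_mem_fiber hr hm hp d j a
    · intro a1 _ a2 _ h
      have h3 := d.1.injective h
      have h4 := basePos_injective hr hp (a₁ := (j, a1)) (a₂ := (j, a2)) (by simpa using h3)
      simpa [Prod.ext_iff] using h4
  simpa using h2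


variable (p m r) in
/-- the subtype of valid partitions -/
abbrev SS := {P : Finpartition (univ : Finset (Fin p)) //
    P.parts.card = m ∧ ∀ s ∈ P.parts, r ≤ s.card}

def toS (hr : 0 < r) (hm : 0 < m) (hp : r * m ≤ p) (d : Dom p m r) : SS p m r :=
  ⟨part hr hm hp d, part_parts_card hr hm hp d, part_parts_le hr hm hp d⟩

/-- enumeration of the parts of `P` -/
noncomputable def ePart (P : SS p m r) (i : Fin m) : Finset (Fin p) :=
  ((Finset.equivFinOfCardEq P.2.1).symm i : Finset (Fin p))

theorem ePart_mem (P : SS p m r) (i : Fin m) : ePart P i ∈ P.1.parts :=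
  ((Finset.equivFinOfCardEq P.2.1).symm i).2

theorem ePart_injective (P : SS p m r) : Function.Injective (ePart P) := by
  intro i1 i2 h
  have := Subtype.ext (p := fun s => s ∈ P.1.parts) h
  exact (Finset.equivFinOfCardEq P.2.1).symm.injective this

variable (p m r) in
/-- encoding codomain -/
abbrev EE (P : SS p m r) : Type :=
  Equiv.Perm (Fin m) ×
    ((i : Fin m) → (Fin r ↪ {x : Fin p // x ∈ ePart P i})) ×
    (Fin (p - r * m) ↪ Fin (p - r * m))

section Enc

variable (hr : 0 < r) (hm : 0 < m) (hp : r * m ≤ p) {P : SS p m r}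

theorem fiber_mem_parts {d : Dom p m r} (hd : toS hr hm hp d = P) (j : Fin m) :
    fiber hr hm d j ∈ P.1.parts := by
  have h1 : (toS hr hm hp d).1.parts = P.1.parts := by rw [hd]
  rw [← h1]
  exact mem_image_of_mem _ (mem_univ j)

/-- index of the fiber of `j` among the parts of `P` -/
noncomputable def fmap {d : Dom p m r} (hd : toS hr hm hp d = P) (j : Fin m) : Fin m :=
  Finset.equivFinOfCardEq P.2.1 ⟨fiber hr hm d j, fiber_mem_parts hr hm hp hd j⟩

theorem ePart_fmap {d : Dom p m r} (hd : toS hr hm hp d = P) (j : Fin m) :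
    ePart P (fmap hr hm hp hd j) = fiber hr hm d j := by
  simp [ePart, fmap, Equiv.symm_apply_apply]

theorem fmap_injective {d : Dom p m r} (hd : toS hr hm hp d = P) :
    Function.Injective (fmap hr hm hp hd) := by
  intro j1 j2 h
  apply fiber_injective hr hm hp d
  rw [← ePart_fmap hr hm hp hd j1, ← ePart_fmap hr hm hp hd j2, h]

/-- the labelling permutation -/
noncomputable def πmap {d : Dom p m r} (hd : toS hr hm hp d = P) : Equiv.Perm (Fin m) :=
  Equiv.ofBijective (fmap hr hm hp hd)
    (Finite.injective_iff_bijective.mp (fmap_injective hr hm hp hd))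

theorem πmap_apply {d : Dom p m r} (hd : toS hr hm hp d = P) (j : Fin m) :
    πmap hr hm hp hd j = fmap hr hm hp hd j := rfl

/-- encoding of the base elements -/
noncomputable def gmap {d : Dom p m r} (hd : toS hr hm hp d = P) (i : Fin m) :
    Fin r ↪ {x : Fin p // x ∈ ePart P i} where
  toFun a := ⟨d.1 (basePos hr hp ((πmap hr hm hp hd).symm i) a), by
    have h1 : fmap hr hm hp hd ((πmap hr hm hp hd).symm i) = i :=
      (πmap hr hm hp hd).apply_symm_apply i
    have h2 : ePart P i = fiber hr hm d ((πmap hr hm hp hd).symm i) := by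
      rw [← ePart_fmap hr hm hp hd, h1]
    rw [h2]
    exact base_mem_fiber hr hm hp d _ a⟩
  inj' := by
    intro a1 a2 h
    have h2 := d.1.injective (congrArg Subtype.val h)
    have h3 := basePos_injective hr hp
      (a₁ := ((πmap hr hm hp hd).symm i, a1)) (a₂ := ((πmap hr hm hp hd).symm i, a2))
      (by simpa using h2)
    simpa [Prod.ext_iff] using h3

/-- leftover elements: not images of base positions -/
def leftover (hr : 0 < r) (hp : r * m ≤ p) (d : Dom p m r) : Finset (Fin p) :=
  univ \ (univ.image (fun q : Fin m × Fin r => d.1 (basePos hr hp q.1 q.2)))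

theorem leftover_card (d : Dom p m r) : (leftover hr hp d).card = p - r * m := by
  have hinj : Function.Injective (fun q : Fin m × Fin r => d.1 (basePos hr hp q.1 q.2)) :=
    fun a b h => basePos_injective hr hp (d.1.injective h)
  rw [leftover, Finset.card_sdiff_of_subset (Finset.subset_univ _),
    Finset.card_image_of_injective _ hinj]
  simp [Nat.mul_comm]

theorem extra_mem_leftover (d : Dom p m r) (t : Fin (p - r * m)) :
    d.1 (extraPos t) ∈ leftover hr hp d := by
  rw [leftover, Finset.mem_sdiff]
  refine ⟨mem_univ _, ?_⟩
  simp only [mem_image, mem_univ, true_and, not_exists]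
  rintro ⟨j, a⟩ h
  have h1 : basePos hr hp j a = extraPos t := d.1.injective h
  have h2 := basePos_lt hr hp j a
  rw [h1] at h2
  simp [extraPos] at h2

/-- encoding of the extra elements -/
noncomputable def τmap {d : Dom p m r} (hd : toS hr hm hp d = P) :
    Fin (p - r * m) ↪ Fin (p - r * m) where
  toFun t := Finset.equivFinOfCardEq (leftover_card hr hp d)
    ⟨d.1 (extraPos t), extra_mem_leftover hr hp d t⟩
  inj' := by
    intro t1 t2 h
    have h1 := (Finset.equivFinOfCardEq (leftover_card hr hp d)).injective h
    have h2 := d.1.injective (congrArg Subtype.val h1)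
    have h3 : (extraPos t1 : Fin p) = extraPos t2 := h2
    simp only [extraPos, Fin.mk.injEq] at h3
    exact Fin.ext (by omega)

/-- full encoding -/
noncomputable def enc (dd : {d : Dom p m r // toS hr hm hp d = P}) : EE p m r P :=
  (πmap hr hm hp dd.2, gmap hr hm hp dd.2, τmap hr hm hp dd.2)

theorem equivFin_val_eq {α : Type*} {s t : Finset α} {n : ℕ} (hst : s = t)
    (hs : s.card = n) (ht : t.card = n) {x : s} {y : t}
    (hxy : Finset.equivFinOfCardEq hs x = Finset.equivFinOfCardEq ht y) :
    (x : α) = (y : α) := by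
  subst hst
  have h1 : Finset.equivFinOfCardEq hs x = Finset.equivFinOfCardEq hs y := hxy
  exact congrArg Subtype.val ((Finset.equivFinOfCardEq hs).injective h1)

theorem enc_injective : Function.Injective (enc hr hm hp (P := P)) := by
  rintro ⟨d1, hd1⟩ ⟨d2, hd2⟩ h
  rw [enc, enc, Prod.ext_iff, Prod.ext_iff] at h
  obtain ⟨hπ0, hg0, hτ0⟩ := h
  have hπ : πmap hr hm hp hd1 = πmap hr hm hp hd2 := hπ0
  have hg : gmap hr hm hp hd1 = gmap hr hm hp hd2 := hg0
  have hτ : τmap hr hm hp hd1 = τmap hr hm hp hd2 := hτ0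
  -- Step A: agreement on base positions
  have hbase : ∀ (j : Fin m) (a : Fin r),
      d1.1 (basePos hr hp j a) = d2.1 (basePos hr hp j a) := by
    intro j a
    set i := πmap hr hm hp hd1 j with hi
    have e1 : gmap hr hm hp hd1 i = gmap hr hm hp hd2 i := congrFun hg i
    have e2 := congrArg Subtype.val (DFunLike.congr_fun e1 a)
    have s1 : (πmap hr hm hp hd1).symm i = j := Equiv.symm_apply_apply _ _
    have s2 : (πmap hr hm hp hd2).symm i = j := by rw [← hπ]; exact s1
    have e3 : d1.1 (basePos hr hp ((πmap hr hm hp hd1).symm i) a)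
        = d2.1 (basePos hr hp ((πmap hr hm hp hd2).symm i) a) := e2
    rw [s1, s2] at e3
    exact e3
  -- Step B: leftovers coincide
  have hB : leftover hr hp d1 = leftover hr hp d2 := by
    rw [leftover, leftover]
    congr 1
    apply Finset.image_congr
    intro q _
    exact hbase q.1 q.2
  -- Step C: agreement on extra positions
  have hextra : ∀ t : Fin (p - r * m), d1.1 (extraPos t) = d2.1 (extraPos t) := by
    intro t
    have e1 := DFunLike.congr_fun hτ t
    exact equivFin_val_eq hB (leftover_card hr hp d1) (leftover_card hr hp d2) e1
  -- Step D: the permutations agree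
  have hσ : d1.1 = d2.1 := by
    apply Equiv.ext
    intro t
    by_cases htr : (t : ℕ) < r * m
    · have hdiv : (t : ℕ) / r < m := by
        rw [Nat.div_lt_iff_lt_mul hr, Nat.mul_comm]; omega
      have hmod : (t : ℕ) % r < r := Nat.mod_lt _ hr
      have ht : t = basePos hr hp ⟨(t : ℕ) / r, hdiv⟩ ⟨(t : ℕ) % r, hmod⟩ := by
        apply Fin.ext
        exact (Nat.div_add_mod (t : ℕ) r).symm
      rw [ht]
      exact hbase _ _
    · have hts : (t : ℕ) - r * m < p - r * m := by have := t.isLt; omega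
      have ht : t = extraPos ⟨(t : ℕ) - r * m, hts⟩ := by
        apply Fin.ext
        simp only [extraPos]
        omega
      rw [ht]
      exact hextra _
  -- Step E: the extra assignments agree
  have hh : d1.2 = d2.2 := by
    funext t
    have m1 : d1.1 (extraPos t) ∈ fiber hr hm d1 (d1.2 t) := extra_mem_fiber hr hm d1 t
    have m2 : d1.1 (extraPos t) ∈ fiber hr hm d2 (d2.2 t) := by
      rw [hσ]; exact extra_mem_fiber hr hm d2 t
    have e1 : d1.1 (extraPos t) ∈ ePart P (fmap hr hm hp hd1 (d1.2 t)) := by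
      rw [ePart_fmap]; exact m1
    have e2 : d1.1 (extraPos t) ∈ ePart P (fmap hr hm hp hd2 (d2.2 t)) := by
      rw [ePart_fmap]; exact m2
    have hfm : ∀ j, fmap hr hm hp hd2 j = fmap hr hm hp hd1 j := by
      intro j
      rw [← πmap_apply, ← πmap_apply, hπ]
    rw [hfm] at e2
    by_contra hne
    have hne' : fmap hr hm hp hd1 (d1.2 t) ≠ fmap hr hm hp hd1 (d2.2 t) :=
      fun hq => hne (fmap_injective hr hm hp hd1 hq)
    have hnep : ePart P (fmap hr hm hp hd1 (d1.2 t)) ≠ ePart P (fmap hr hm hp hd1 (d2.2 t)) :=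
      fun hq => hne' (ePart_injective P hq)
    have hdisj := P.1.disjoint (by simpa using ePart_mem P (fmap hr hm hp hd1 (d1.2 t)))
      (by simpa using ePart_mem P (fmap hr hm hp hd1 (d2.2 t))) hnep
    exact (Finset.disjoint_left.mp hdisj e1) e2
  exact Subtype.ext (Prod.ext hσ hh)

theorem card_fiber_le (P : SS p m r) :
    Fintype.card {d : Dom p m r // toS hr hm hp d = P} ≤ Fintype.card (EE p m r P) :=
  Fintype.card_le_of_injective _ (enc_injective hr hm hp)

theorem card_EE (P : SS p m r) :
    Fintype.card (EE p m r P) =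
      m.factorial * ((∏ i : Fin m, (ePart P i).card.descFactorial r) *
        (p - r * m).factorial) := by
  rw [Fintype.card_prod, Fintype.card_prod]
  congr 1
  · rw [Fintype.card_perm, Fintype.card_fin]
  congr 1
  · rw [Fintype.card_pi]
    apply Finset.prod_congr rfl
    intro i _
    rw [Fintype.card_embedding_eq, Fintype.card_fin, Fintype.card_coe]
  · rw [Fintype.card_embedding_eq, Fintype.card_fin, Nat.descFactorial_self]

omit hr hm hp in
theorem sum_ePart_card (P : SS p m r) : ∑ i : Fin m, (ePart P i).card = p := by
  have h1 : ∑ i : Fin m, (ePart P i).card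
      = ∑ a : {x // x ∈ P.1.parts}, (a : Finset (Fin p)).card :=
    Equiv.sum_comp (Finset.equivFinOfCardEq P.2.1).symm
      (fun a => (a : Finset (Fin p)).card)
  rw [h1, Finset.univ_eq_attach, Finset.sum_attach P.1.parts (fun s => s.card),
    P.1.sum_card_parts]
  simp

omit hr hm hp in
theorem prod_ePart_le (P : SS p m r) :
    (∏ i : Fin m, (ePart P i).card.descFactorial r)
      ≤ r.factorial ^ m * (r + 1) ^ (p - r * m) := by
  have hge : ∀ i : Fin m, r ≤ (ePart P i).card := fun i => P.2.2 _ (ePart_mem P i)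
  have hsub : ∑ i : Fin m, ((ePart P i).card - r) = p - r * m := by
    have h1 : ∑ i : Fin m, (((ePart P i).card - r) + r) = ∑ i : Fin m, (ePart P i).card := by
      apply Finset.sum_congr rfl
      intro i _
      have := hge i
      omega
    rw [Finset.sum_add_distrib, Finset.sum_const, Finset.card_univ, Fintype.card_fin,
      smul_eq_mul] at h1
    have h2 := sum_ePart_card P
    have h3 : m * r = r * m := Nat.mul_comm m r
    omega
  calc ∏ i : Fin m, (ePart P i).card.descFactorial r
      ≤ ∏ i : Fin m, (r.factorial * (r + 1) ^ ((ePart P i).card - r)) := by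
        apply Finset.prod_le_prod'
        intro i _
        exact my_descFactorial_le (hge i)
    _ = r.factorial ^ m * (r + 1) ^ (∑ i : Fin m, ((ePart P i).card - r)) := by
        rw [Finset.prod_mul_distrib, Finset.prod_const, Finset.card_univ, Fintype.card_fin,
          Finset.prod_pow_eq_pow_sum]
    _ = r.factorial ^ m * (r + 1) ^ (p - r * m) := by rw [hsub]

include hr hm hp in
theorem key_nat :
    p.factorial * m ^ (p - r * m) ≤
      (Fintype.card (SS p m r)) *
        (m.factorial * ((r.factorial ^ m * (r + 1) ^ (p - r * m)) *
          (p - r * m).factorial)) := by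
  classical
  set K := m.factorial * ((r.factorial ^ m * (r + 1) ^ (p - r * m)) *
    (p - r * m).factorial) with hK
  have h1 : (univ : Finset (Dom p m r)).card
      ≤ K * ((univ : Finset (Dom p m r)).image (toS hr hm hp)).card := by
    apply Finset.card_le_mul_card_image
    intro P _
    have h2 : (univ.filter (fun d => toS hr hm hp d = P)).card
        = Fintype.card {d : Dom p m r // toS hr hm hp d = P} := by
      rw [Fintype.card_subtype]
    rw [h2]
    calc Fintype.card {d : Dom p m r // toS hr hm hp d = P}
        ≤ Fintype.card (EE p m r P) := card_fiber_le hr hm hp P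
      _ = m.factorial * ((∏ i : Fin m, (ePart P i).card.descFactorial r) *
          (p - r * m).factorial) := card_EE P
      _ ≤ K := by
          rw [hK]
          exact Nat.mul_le_mul_left _
            (Nat.mul_le_mul_right _ (prod_ePart_le P))
  have h3 : ((univ : Finset (Dom p m r)).image (toS hr hm hp)).card
      ≤ Fintype.card (SS p m r) := by
    rw [← Finset.card_univ]
    exact Finset.card_le_card (Finset.subset_univ _)
  have h4 : (univ : Finset (Dom p m r)).card = p.factorial * m ^ (p - r * m) := by
    simp [Fintype.card_prod, Fintype.card_perm, Fintype.card_fun]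
  calc p.factorial * m ^ (p - r * m) = (univ : Finset (Dom p m r)).card := h4.symm
    _ ≤ K * ((univ : Finset (Dom p m r)).image (toS hr hm hp)).card := h1
    _ ≤ K * Fintype.card (SS p m r) := Nat.mul_le_mul_left _ h3
    _ = Fintype.card (SS p m r) * K := Nat.mul_comm _ _

end Enc

end Stmt16Aux

/-- `stirlingAssoc r p m` is the `r`-associated Stirling number of the second kind:
the number of partitions of `{1,…,p}` into exactly `m` parts, each of size at least `r`. -/
noncomputable def stirlingAssoc (r p m : ℕ) : ℕ :=
  Nat.card {P : Finpartition (Finset.univ : Finset (Fin p)) //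
    P.parts.card = m ∧ ∀ s ∈ P.parts, r ≤ s.card}

theorem stmt_16 (m r : ℕ) (hm : 0 < m) (hr : 0 < r) (p : ℕ) (hp : r * m ≤ p) :
    (stirlingAssoc r p m : ℝ) ≥
      (p.factorial : ℝ) * (m : ℝ) ^ (p - r * m) /
        ((m.factorial : ℝ) * (r.factorial : ℝ) ^ m * ((p - r * m).factorial : ℝ) *
          ((r : ℝ) + 1) ^ (p - r * m)) := by
  have hst : stirlingAssoc r p m = Fintype.card (Stmt16Aux.SS p m r) :=
    Nat.card_eq_fintype_card
  have key := Stmt16Aux.key_nat (p := p) (m := m) (r := r) hr hm hp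
  have hden : (0 : ℝ) < (m.factorial : ℝ) * (r.factorial : ℝ) ^ m *
      ((p - r * m).factorial : ℝ) * ((r : ℝ) + 1) ^ (p - r * m) := by
    have h1 := m.factorial_pos
    have h2 := r.factorial_pos
    have h3 := (p - r * m).factorial_pos
    positivity
  rw [ge_iff_le, div_le_iff₀ hden, hst]
  have hcast := (Nat.cast_le (α := ℝ)).mpr key
  push_cast at hcast
  refine le_trans (le_of_eq ?_) (le_trans hcast (le_of_eq ?_)) <;> ring
end

section
/- Let m, r be positive integers and p a natural number with p ≥ r·m. Then S_r(p,m) ≥ m^p/m! − ((m−1)^{p−rm}/m!) · Σ_{i=1}^{mr} C(p, p−rm+i)·(m−1)^i, where C(·,·) denotes the binomial coefficient. -/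
set_option maxHeartbeats 1600000

open Finset

lemma choose_mono_half {u a b : ℕ} (hab : a ≤ b) (h2 : 2 * b ≤ u) :
    u.choose a ≤ u.choose b := by
  induction b, hab using Nat.le_induction with
  | base => exact le_rfl
  | succ k hk ih =>
    have h2k : 2 * k ≤ u := by omega
    refine (ih h2k).trans (Nat.choose_le_succ_of_lt_half_left ?_)
    omega

lemma choose_mono_add {u a b : ℕ} (hab : a ≤ b) (h : a + b ≤ u) :
    u.choose a ≤ u.choose b := by
  rcases le_or_gt (2 * b) u with h2 | h2
  · exact choose_mono_half hab h2
  · have hbu : b ≤ u := by omega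
    rw [← Nat.choose_symm hbu]
    exact choose_mono_half (by omega) (by omega)

lemma window (u r K a : ℕ) (hr : 0 < r) (h2r : 2 * r ≤ a) (hu : u = a + K) :
    ∑ j ∈ range (K + 1), u.choose j ≤ ∑ c ∈ Icc r (K + r), u.choose c := by
  have hIcc : ∑ c ∈ Icc r (K + r), u.choose c
      = ∑ j ∈ range (K + 1), u.choose (r + j) := by
    rw [← Finset.Ico_add_one_right_eq_Icc, Finset.sum_Ico_eq_sum_range]
    have h : K + r + 1 - r = K + 1 := by omega
    rw [h]
  rcases lt_or_ge K r with hK | hK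
  · -- case B : termwise j ↦ r + j
    rw [hIcc]
    refine Finset.sum_le_sum fun j hj => ?_
    rw [Finset.mem_range] at hj
    exact choose_mono_add (a := j) (b := r + j) (by omega) (by omega)
  · -- case A : split at r
    have hsplit1 : ∑ j ∈ range (K + 1), u.choose j
        = ∑ j ∈ range r, u.choose j + ∑ j ∈ Ico r (K + 1), u.choose j := by
      rw [Finset.range_eq_Ico,
        ← Finset.sum_Ico_consecutive _ (Nat.zero_le r) (by omega : r ≤ K + 1),
        ← Finset.range_eq_Ico]
    have hsplit2 : ∑ c ∈ Icc r (K + r), u.choose c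
        = ∑ c ∈ Ico r (K + 1), u.choose c + ∑ c ∈ Ico (K + 1) (K + r + 1), u.choose c := by
      rw [← Finset.Ico_add_one_right_eq_Icc,
        ← Finset.sum_Ico_consecutive _ (by omega : r ≤ K + 1) (by omega)]
    have h3 : ∑ j ∈ range r, u.choose j ≤ ∑ c ∈ Ico (K + 1) (K + r + 1), u.choose c := by
      have h4 : ∑ c ∈ Ico (K + 1) (K + r + 1), u.choose c
          = ∑ j ∈ range r, u.choose (K + 1 + j) := by
        rw [Finset.sum_Ico_eq_sum_range]
        have h5 : K + r + 1 - (K + 1) = r := by omega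
        rw [h5]
      rw [h4]
      refine Finset.sum_le_sum fun j hj => ?_
      rw [Finset.mem_range] at hj
      exact choose_mono_add (a := j) (b := K + 1 + j) (by omega) (by omega)
    omega

def goodCard (r m : ℕ) (α : Type) [Fintype α] [DecidableEq α] : ℕ :=
  Fintype.card {f : α → Fin m // ∀ j, r ≤ (univ.filter fun i => f i = j).card}

lemma goodCard_congr {α β : Type} [Fintype α] [DecidableEq α] [Fintype β] [DecidableEq β]
    (r m : ℕ) (e : α ≃ β) : goodCard r m α = goodCard r m β := by
  refine Fintype.card_congr (Equiv.subtypeEquiv (Equiv.arrowCongr e (Equiv.refl (Fin m))) ?_)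
  intro f
  have key : ∀ j, (univ.filter fun i : α => f i = j).card
      = (univ.filter fun b : β => f (e.symm b) = j).card := by
    intro j
    refine Finset.card_bij' (fun a _ => e a) (fun b _ => e.symm b) ?_ ?_ ?_ ?_
    · intro a ha
      simp only [mem_filter, mem_univ, true_and] at ha ⊢
      simpa using ha
    · intro b hb
      simp only [mem_filter, mem_univ, true_and] at hb ⊢
      exact hb
    · intro a _; simp
    · intro b _; simp
  constructor
  · intro h j; simpa [Equiv.arrowCongr, ← key j] using h j
  · intro h j; rw [key j]; simpa [Equiv.arrowCongr] using h j

lemma goodCard_one {p r : ℕ} (hrp : r ≤ p) : goodCard r 1 (Fin p) = 1 := by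
  rw [goodCard, Fintype.card_eq_one_iff]
  refine ⟨⟨fun _ => 0, fun j => ?_⟩, fun a => ?_⟩
  · have h : (univ.filter fun _ : Fin p => (0 : Fin 1) = j) = univ := by
      ext i
      simp [Subsingleton.elim (0 : Fin 1) j]
    rw [h, card_univ, Fintype.card_fin]
    exact hrp
  · exact Subtype.ext (funext fun i => Subsingleton.elim _ _)



def pack (r m p : ℕ) (x : Σ s : {s : Finset (Fin p) // r ≤ s.card},
    {g : {y : Fin p // y ∉ s.1} → Fin m // ∀ j, r ≤ (univ.filter fun i => g i = j).card}) :
    Fin p → Fin (m + 1) :=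
  fun i => if h : i ∈ x.1.1 then Fin.last m else (x.2.1 ⟨i, h⟩).castSucc

lemma pack_last {r m p : ℕ} (x) :
    (univ.filter fun i => pack r m p x i = Fin.last m) = x.1.1 := by
  ext i
  simp only [mem_filter, mem_univ, true_and, pack]
  by_cases h : i ∈ x.1.1
  · simp [h]
  · simp only [h, dite_false, iff_false]
    intro hc
    simp [h] at hc
    
lemma pack_cast {r m p : ℕ} (x) (j : Fin m) :
    (univ.filter fun i => pack r m p x i = j.castSucc).card
      = (univ.filter fun i => x.2.1 i = j).card := by
  refine (Finset.card_bij (fun (a : {y : Fin p // y ∉ x.1.1}) _ => a.1) ?_ ?_ ?_).symm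
  · intro a ha
    simp only [mem_filter, mem_univ, true_and] at ha ⊢
    rw [pack, dif_neg a.2, ha]
  · intro a _ b _ hab
    exact Subtype.ext hab
  · intro b hb
    simp only [mem_filter, mem_univ, true_and] at hb
    have hbs : b ∉ x.1.1 := by
      intro hmem
      rw [pack, dif_pos hmem] at hb
      exact (Fin.castSucc_lt_last j).ne' hb
    refine ⟨⟨b, hbs⟩, ?_, rfl⟩
    simp only [mem_filter, mem_univ, true_and]
    rw [pack, dif_neg hbs] at hb
    exact Fin.castSucc_injective m hb

lemma pack_good {r m p : ℕ} (x) (j : Fin (m + 1)) :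
    r ≤ (univ.filter fun i => pack r m p x i = j).card := by
  induction j using Fin.lastCases with
  | last => rw [pack_last]; exact x.1.2
  | cast j => rw [pack_cast]; exact x.2.2 j

lemma pack_inj {r m p : ℕ} : Function.Injective (pack r m p) := by
  rintro ⟨⟨s, hs⟩, ⟨g, hg⟩⟩ ⟨⟨t, ht⟩, ⟨g', hg'⟩⟩ h
  obtain rfl : s = t := by
    have h1 : (univ.filter fun i => pack r m p ⟨⟨s, hs⟩, ⟨g, hg⟩⟩ i = Fin.last m) = s :=
      pack_last _
    have h2 : (univ.filter fun i => pack r m p ⟨⟨t, ht⟩, ⟨g', hg'⟩⟩ i = Fin.last m) = t :=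
      pack_last _
    rw [← h1, ← h2, h]
  obtain rfl : g = g' := by
    funext i
    have := congrFun h i.1
    simp only [pack, dif_neg i.2] at this
    exact Fin.castSucc_injective m this
  rfl

lemma goodCard_succ_ge (r m p : ℕ) :
    ∑ c ∈ Icc r p, p.choose c * goodCard r m (Fin (p - c))
      ≤ goodCard r (m + 1) (Fin p) := by
  classical
  have hcompl : ∀ s : Finset (Fin p), Fintype.card {x : Fin p // x ∉ s} = p - s.card := by
    intro s
    rw [Fintype.card_subtype_compl, Fintype.card_fin]
    congr 1
    exact Fintype.card_coe s
  have hcardS : Fintype.card (Σ s : {s : Finset (Fin p) // r ≤ s.card},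
      {g : {x : Fin p // x ∉ s.1} → Fin m // ∀ j, r ≤ (univ.filter fun i => g i = j).card})
      = ∑ c ∈ Icc r p, p.choose c * goodCard r m (Fin (p - c)) := by
    rw [Fintype.card_sigma]
    have h1 : ∀ s : {s : Finset (Fin p) // r ≤ s.card},
        Fintype.card {g : {x : Fin p // x ∉ s.1} → Fin m //
          ∀ j, r ≤ (univ.filter fun i => g i = j).card}
        = goodCard r m (Fin (p - s.1.card)) := by
      intro s
      exact goodCard_congr r m (Fintype.equivFinOfCardEq (hcompl s.1))
    have hset : univ.filter (fun s : Finset (Fin p) => r ≤ s.card)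
        = (Icc r p).biUnion (fun c => powersetCard c univ) := by
      ext s
      simp only [mem_filter, mem_univ, true_and, mem_biUnion, mem_Icc,
        mem_powersetCard, subset_univ, true_and]
      constructor
      · intro h
        refine ⟨s.card, ⟨h, ?_⟩, rfl⟩
        simpa using Finset.card_le_univ s
      · rintro ⟨c, ⟨hc1, _⟩, rfl⟩
        exact hc1
    have hdisj : ((Icc r p : Finset ℕ) : Set ℕ).PairwiseDisjoint
        (fun c => powersetCard c (univ : Finset (Fin p))) := by
      intro c _ d _ hcd
      apply Finset.disjoint_left.2
      intro s hs1 hs2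
      simp only [mem_powersetCard] at hs1 hs2
      exact hcd (by rw [← hs1.2, ← hs2.2])
    calc ∑ s : {s : Finset (Fin p) // r ≤ s.card}, Fintype.card _
        = ∑ s : {s : Finset (Fin p) // r ≤ s.card}, goodCard r m (Fin (p - s.1.card)) :=
          Fintype.sum_congr _ _ h1
      _ = ∑ s ∈ univ.filter (fun s : Finset (Fin p) => r ≤ s.card),
            goodCard r m (Fin (p - s.card)) :=
          (Finset.sum_subtype (p := fun s : Finset (Fin p) => r ≤ s.card)
            (univ.filter (fun s : Finset (Fin p) => r ≤ s.card)) (fun x => by simp)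
            (fun s => goodCard r m (Fin (p - s.card)))).symm
      _ = ∑ c ∈ Icc r p, ∑ s ∈ powersetCard c univ,
            goodCard r m (Fin (p - s.card)) := by
          rw [hset, Finset.sum_biUnion hdisj]
      _ = ∑ c ∈ Icc r p, p.choose c * goodCard r m (Fin (p - c)) := by
          refine Finset.sum_congr rfl fun c _ => ?_
          have h2 : ∀ s ∈ powersetCard c (univ : Finset (Fin p)),
              goodCard r m (Fin (p - s.card)) = goodCard r m (Fin (p - c)) := by
            intro s hs
            rw [(mem_powersetCard.1 hs).2]
          rw [Finset.sum_congr rfl h2, Finset.sum_const, smul_eq_mul,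
            Finset.card_powersetCard, Finset.card_univ, Fintype.card_fin]
  rw [← hcardS, goodCard]
  exact Fintype.card_le_of_injective
    (fun x => ⟨pack r m p x, pack_good x⟩)
    (fun x y hxy => pack_inj (by simpa using congrArg Subtype.val hxy))

lemma key (r : ℕ) (hr : 0 < r) (n : ℕ) : ∀ p : ℕ,
    ∑ s ∈ Icc (r * (n + 1)) p, p.choose s * n ^ (p - s) ≤ goodCard r (n + 1) (Fin p) := by
  induction n with
  | zero =>
    intro p
    rcases le_or_gt r p with hrp | hrp
    · have hIcc : r * (0 + 1) = r := by ring
      rw [hIcc]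
      have hsum : ∑ s ∈ Icc r p, p.choose s * 0 ^ (p - s) = 1 := by
        rw [Finset.sum_eq_single p]
        · simp
        · intro s hs hsp
          rw [mem_Icc] at hs
          rw [zero_pow (by omega : p - s ≠ 0), Nat.mul_zero]
        · intro hp; exact absurd (mem_Icc.2 ⟨hrp, le_rfl⟩) hp
      rw [hsum, goodCard_one hrp]
    · have hempty : Icc (r * (0 + 1)) p = (∅ : Finset ℕ) := by
        apply Finset.Icc_eq_empty
        omega
      rw [hempty]
      simp
  | succ n ih =>
    intro p
    set b := r * (n + 1) with hb
    set a := r * (n + 1 + 1) with ha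
    have hba : a = b + r := by rw [ha, hb]; ring
    have h2r : 2 * r ≤ a := by
      rw [ha]
      calc 2 * r = r * 2 := by ring
        _ ≤ r * (n + 1 + 1) := Nat.mul_le_mul_left _ (by omega)
    have step1 : ∑ c ∈ Icc r p, p.choose c * goodCard r (n + 1) (Fin (p - c))
        ≤ goodCard r (n + 1 + 1) (Fin p) := goodCard_succ_ge r (n + 1) p
    have step2 : ∑ c ∈ Icc r p, p.choose c *
          (∑ s ∈ Icc b (p - c), (p - c).choose s * n ^ (p - c - s))
        ≤ ∑ c ∈ Icc r p, p.choose c * goodCard r (n + 1) (Fin (p - c)) :=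
      Finset.sum_le_sum fun c _ => Nat.mul_le_mul_left _ (ih (p - c))
    have inner2 : ∀ c ∈ Icc r p,
        p.choose c * (∑ s ∈ Icc b (p - c), (p - c).choose s * n ^ (p - c - s))
        = ∑ u ∈ Icc (c + b) p, p.choose u * n ^ (p - u) * u.choose c := by
      intro c hc
      rw [mem_Icc] at hc
      rw [Finset.mul_sum]
      refine Finset.sum_nbij' (fun s => c + s) (fun u => u - c) ?_ ?_ ?_ ?_ ?_
      · intro s hs; rw [mem_Icc] at hs ⊢; omega
      · intro u hu; rw [mem_Icc] at hu ⊢; omega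
      · intro s _; omega
      · intro u hu; rw [mem_Icc] at hu; omega
      · intro s hs
        rw [mem_Icc] at hs
        have h1 : p.choose (c + s) * (c + s).choose c
            = p.choose c * (p - c).choose (c + s - c) := Nat.choose_mul (by omega)
        have h2 : c + s - c = s := by omega
        have h3 : p - c - s = p - (c + s) := by omega
        rw [h2] at h1
        calc p.choose c * ((p - c).choose s * n ^ (p - c - s))
            = (p.choose c * (p - c).choose s) * n ^ (p - (c + s)) := by rw [h3]; ring
          _ = (p.choose (c + s) * (c + s).choose c) * n ^ (p - (c + s)) := by rw [h1]
          _ = p.choose (c + s) * n ^ (p - (c + s)) * (c + s).choose c := by ring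
    have II : ∑ c ∈ Icc r p, p.choose c *
          (∑ s ∈ Icc b (p - c), (p - c).choose s * n ^ (p - c - s))
        = ∑ u ∈ Icc a p, ∑ c ∈ Icc r (u - b), p.choose u * n ^ (p - u) * u.choose c := by
      rw [Finset.sum_congr rfl inner2, hba]
      refine Finset.sum_comm' ?_
      intro c u
      simp only [mem_Icc]
      omega
    have inner1 : ∀ s ∈ Icc a p, p.choose s * (n + 1) ^ (p - s)
        = ∑ u ∈ Icc s p, p.choose u * n ^ (p - u) * u.choose s := by
      intro s hs
      rw [mem_Icc] at hs
      have hpow : (n + 1) ^ (p - s)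
          = ∑ k ∈ range (p - s + 1), (p - s).choose k * n ^ (p - s - k) := by
        have h := add_pow (1 : ℕ) n (p - s)
        simp only [one_pow, one_mul] at h
        rw [add_comm 1 n] at h
        rw [h]
        exact Finset.sum_congr rfl fun k _ => mul_comm _ _
      rw [hpow, Finset.mul_sum]
      refine Finset.sum_nbij' (fun k => s + k) (fun u => u - s) ?_ ?_ ?_ ?_ ?_
      · intro k hk; rw [mem_range] at hk; rw [mem_Icc]; omega
      · intro u hu; rw [mem_Icc] at hu; rw [mem_range]; omega
      · intro k _; omega
      · intro u hu; rw [mem_Icc] at hu; omega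
      · intro k hk
        rw [mem_range] at hk
        have h1 : p.choose (s + k) * (s + k).choose s
            = p.choose s * (p - s).choose (s + k - s) := Nat.choose_mul (by omega)
        have h2 : s + k - s = k := by omega
        have h3 : p - s - k = p - (s + k) := by omega
        rw [h2] at h1
        calc p.choose s * ((p - s).choose k * n ^ (p - s - k))
            = (p.choose s * (p - s).choose k) * n ^ (p - (s + k)) := by rw [h3]; ring
          _ = (p.choose (s + k) * (s + k).choose s) * n ^ (p - (s + k)) := by rw [h1]
          _ = p.choose (s + k) * n ^ (p - (s + k)) * (s + k).choose s := by ring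
    have I : ∑ s ∈ Icc a p, p.choose s * (n + 1) ^ (p - s)
        = ∑ u ∈ Icc a p, ∑ s ∈ Icc a u, p.choose u * n ^ (p - u) * u.choose s := by
      rw [Finset.sum_congr rfl inner1]
      refine Finset.sum_comm' ?_
      intro s u
      simp only [mem_Icc]
      omega
    have III : ∀ u ∈ Icc a p,
        ∑ s ∈ Icc a u, p.choose u * n ^ (p - u) * u.choose s
          ≤ ∑ c ∈ Icc r (u - b), p.choose u * n ^ (p - u) * u.choose c := by
      intro u hu
      rw [mem_Icc] at hu
      rw [← Finset.mul_sum, ← Finset.mul_sum]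
      refine Nat.mul_le_mul_left _ ?_
      have hrefl : ∑ s ∈ Icc a u, u.choose s = ∑ j ∈ range (u - a + 1), u.choose j := by
        refine Finset.sum_nbij' (fun s => u - s) (fun j => u - j) ?_ ?_ ?_ ?_ ?_
        · intro s hs; rw [mem_Icc] at hs; rw [mem_range]; omega
        · intro j hj; rw [mem_range] at hj; rw [mem_Icc]; omega
        · intro s hs; rw [mem_Icc] at hs; omega
        · intro j hj; rw [mem_range] at hj; omega
        · intro s hs
          rw [mem_Icc] at hs
          exact (Nat.choose_symm (by omega)).symm
      have hub : u - b = u - a + r := by omega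
      rw [hrefl, hub]
      exact window u r (u - a) a hr h2r (by omega)
    calc ∑ s ∈ Icc (r * (n + 1 + 1)) p, p.choose s * (n + 1) ^ (p - s)
        = ∑ u ∈ Icc a p, ∑ s ∈ Icc a u, p.choose u * n ^ (p - u) * u.choose s := I
      _ ≤ ∑ u ∈ Icc a p, ∑ c ∈ Icc r (u - b), p.choose u * n ^ (p - u) * u.choose c :=
          Finset.sum_le_sum III
      _ = ∑ c ∈ Icc r p, p.choose c *
            (∑ s ∈ Icc b (p - c), (p - c).choose s * n ^ (p - c - s)) := II.symm
      _ ≤ ∑ c ∈ Icc r p, p.choose c * goodCard r (n + 1) (Fin (p - c)) := step2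
      _ ≤ goodCard r (n + 1 + 1) (Fin p) := step1

def fiberPart {p m : ℕ} (f : Fin p → Fin m)
    (hf : ∀ j, (univ.filter fun i => f i = j).Nonempty) :
    Finpartition (univ : Finset (Fin p)) where
  parts := univ.image fun j => univ.filter fun i => f i = j
  supIndep := by
    rw [Finset.supIndep_iff_pairwiseDisjoint]
    intro s hs t ht hst
    simp only [Finset.mem_coe, Finset.mem_image, Finset.mem_univ, true_and] at hs ht
    obtain ⟨j, rfl⟩ := hs
    obtain ⟨j', rfl⟩ := ht
    simp only [Function.onFun, id_eq]
    rw [Finset.disjoint_left]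
    intro x hx hx'
    rw [mem_filter] at hx hx'
    exact hst (by rw [← hx.2, hx'.2])
  sup_parts := by
    ext x
    simp only [Finset.sup_image, Finset.mem_univ, iff_true]
    rw [Finset.mem_sup]
    exact ⟨f x, mem_univ _, by simp⟩
  bot_notMem := by
    simp only [Finset.bot_eq_empty, Finset.mem_image, Finset.mem_univ, true_and, not_exists]
    intro j h
    exact Finset.not_nonempty_empty (h ▸ hf j)

lemma stirling_count (r p m : ℕ) (hr : 0 < r) :
    goodCard r m (Fin p) ≤ stirlingAssoc r p m * m.factorial := by
  classical
  rw [stirlingAssoc, Nat.card_eq_fintype_card, goodCard]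
  have hne : ∀ (f : {f : Fin p → Fin m // ∀ j, r ≤ (univ.filter fun i => f i = j).card}) j,
      (univ.filter fun i => f.1 i = j).Nonempty := by
    intro f j
    rw [← Finset.card_pos]
    exact lt_of_lt_of_le hr (f.2 j)
  let φ : {f : Fin p → Fin m // ∀ j, r ≤ (univ.filter fun i => f i = j).card} →
      {P : Finpartition (Finset.univ : Finset (Fin p)) //
        P.parts.card = m ∧ ∀ s ∈ P.parts, r ≤ s.card} := by
    intro f
    refine ⟨fiberPart f.1 (hne f), ?_, ?_⟩
    · show (univ.image fun j => univ.filter fun i => f.1 i = j).card = m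
      rw [Finset.card_image_of_injective]
      · exact Finset.card_fin m
      · intro j j' h
        dsimp only at h
        obtain ⟨x, hx⟩ := hne f j
        rw [mem_filter] at hx
        have hx' : x ∈ univ.filter fun i => f.1 i = j' := by rw [← h]; exact mem_filter.2 hx
        rw [mem_filter] at hx'
        rw [← hx.2, hx'.2]
    · intro s hs
      obtain ⟨j, _, rfl⟩ := Finset.mem_image.1 hs
      exact f.2 j
  have hfiber : ∀ P, Fintype.card {f // φ f = P} ≤ m.factorial := by
    intro P
    have hemb : Fintype.card ({s // s ∈ P.1.parts} ↪ Fin m) = m.factorial := by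
      rw [Fintype.card_embedding_eq, Fintype.card_fin, Fintype.card_coe, P.2.1,
        Nat.descFactorial_self]
    rw [← hemb]
    have hne' : ∀ s ∈ P.1.parts, s.Nonempty := fun s hs =>
      P.1.nonempty_of_mem_parts hs
    have hparts : ∀ (f : {f // φ f = P}),
        P.1.parts = univ.image fun j => univ.filter fun i => f.1.1 i = j :=
      fun f => (congrArg (fun Q => (Subtype.val Q).parts) f.2).symm
    have hval : ∀ (f : {f // φ f = P}) (s : Finset (Fin p)) (hs : s ∈ P.1.parts),
        s = univ.filter fun i => f.1.1 i = f.1.1 (s.min' (hne' s hs)) := by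
      intro f s hs
      obtain ⟨j, hj⟩ : ∃ j, s = univ.filter fun i => f.1.1 i = j := by
        have h2 := hs
        rw [hparts f, Finset.mem_image] at h2
        obtain ⟨j, _, e⟩ := h2
        exact ⟨j, e.symm⟩
      have hmin : f.1.1 (s.min' (hne' s hs)) = j := by
        have hm2 : s.min' (hne' s hs) ∈ (univ.filter fun i => f.1.1 i = j) := by
          rw [← hj]
          exact Finset.min'_mem s (hne' s hs)
        exact (mem_filter.1 hm2).2
      rw [hmin]
      exact hj
    let e : {f // φ f = P} → ({s // s ∈ P.1.parts} ↪ Fin m) := fun f =>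
      ⟨fun s => f.1.1 (s.1.min' (hne' s.1 s.2)), by
        intro s t h
        dsimp only at h
        refine Subtype.ext ?_
        rw [hval f s.1 s.2, hval f t.1 t.2, h]⟩
    refine Fintype.card_le_of_injective e ?_
    intro f g h
    refine Subtype.ext (Subtype.ext (funext fun i => ?_))
    have hs : (univ.filter fun x => f.1.1 x = f.1.1 i) ∈ P.1.parts := by
      rw [hparts f]
      exact Finset.mem_image.2 ⟨f.1.1 i, mem_univ _, rfl⟩
    have hif : i ∈ (univ.filter fun x => f.1.1 x = f.1.1 i) := by
      rw [mem_filter]; exact ⟨mem_univ _, rfl⟩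
    have h1 : e f ⟨_, hs⟩ = f.1.1 i := by
      show f.1.1 (Finset.min' _ _) = f.1.1 i
      have hm := Finset.min'_mem (univ.filter fun x => f.1.1 x = f.1.1 i) (hne' _ hs)
      rw [mem_filter] at hm
      exact hm.2
    have h2 : e g ⟨_, hs⟩ = g.1.1 i := by
      show g.1.1 (Finset.min' _ _) = g.1.1 i
      have h3 := hval g _ hs
      have h4 := hif
      rw [h3, mem_filter] at h4
      exact h4.2.symm
    have h5 := DFunLike.congr_fun h (⟨_, hs⟩ : {s // s ∈ P.1.parts})
    rw [h1, h2] at h5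
    exact h5
  calc Fintype.card {f : Fin p → Fin m // ∀ j, r ≤ (univ.filter fun i => f i = j).card}
      = Fintype.card (Σ P : {P : Finpartition (Finset.univ : Finset (Fin p)) //
          P.parts.card = m ∧ ∀ s ∈ P.parts, r ≤ s.card}, {f // φ f = P}) :=
        Fintype.card_congr (Equiv.sigmaFiberEquiv φ).symm
    _ = ∑ P : {P : Finpartition (Finset.univ : Finset (Fin p)) //
          P.parts.card = m ∧ ∀ s ∈ P.parts, r ≤ s.card}, Fintype.card {f // φ f = P} :=
        Fintype.card_sigma
    _ ≤ ∑ _P : {P : Finpartition (Finset.univ : Finset (Fin p)) //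
          P.parts.card = m ∧ ∀ s ∈ P.parts, r ≤ s.card}, m.factorial :=
        Finset.sum_le_sum fun P _ => hfiber P
    _ = Fintype.card {P : Finpartition (Finset.univ : Finset (Fin p)) //
          P.parts.card = m ∧ ∀ s ∈ P.parts, r ≤ s.card} * m.factorial := by
        rw [Finset.sum_const, smul_eq_mul, Finset.card_univ]

theorem stmt_18 (m r : ℕ) (hm : 0 < m) (hr : 0 < r) (p : ℕ) (hp : r * m ≤ p) :
    (stirlingAssoc r p m : ℝ) ≥
      (m : ℝ) ^ p / (m.factorial : ℝ) -
        ((m : ℝ) - 1) ^ (p - r * m) / (m.factorial : ℝ) *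
          ∑ i ∈ Finset.Icc 1 (m * r),
            (p.choose (p - r * m + i) : ℝ) * ((m : ℝ) - 1) ^ i := by
  set n := m - 1 with hn
  have hmn : m = n + 1 := by omega
  have keyfact : ∑ s ∈ Icc (r * m) p, p.choose s * n ^ (p - s)
      ≤ stirlingAssoc r p m * m.factorial := by
    have hkey := key r hr n p
    rw [← hmn] at hkey
    exact hkey.trans (stirling_count r p m hr)
  -- natural number inequality
  have hnat : m ^ p ≤ stirlingAssoc r p m * m.factorial
      + ∑ i ∈ Icc 1 (m * r), p.choose (p - r * m + i) * n ^ (p - r * m + i) := by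
    have hbin : m ^ p = ∑ s ∈ range (p + 1), p.choose s * n ^ (p - s) := by
      have h := add_pow (1 : ℕ) n p
      simp only [one_pow, one_mul] at h
      rw [hmn, add_comm n 1, h]
      exact Finset.sum_congr rfl fun k _ => mul_comm _ _
    have hsplit : ∑ s ∈ range (p + 1), p.choose s * n ^ (p - s)
        = ∑ s ∈ Ico 0 (r * m), p.choose s * n ^ (p - s)
          + ∑ s ∈ Icc (r * m) p, p.choose s * n ^ (p - s) := by
      rw [← Finset.Ico_add_one_right_eq_Icc, range_eq_Ico,
        ← Finset.sum_Ico_consecutive _ (Nat.zero_le (r * m)) (by omega : r * m ≤ p + 1)]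
    have hhead : ∑ s ∈ Ico 0 (r * m), p.choose s * n ^ (p - s)
        = ∑ i ∈ Icc 1 (r * m), p.choose (p - r * m + i) * n ^ (p - r * m + i) := by
      refine Finset.sum_nbij' (fun s => r * m - s) (fun i => r * m - i) ?_ ?_ ?_ ?_ ?_
      · intro s hs; rw [mem_Ico] at hs; rw [mem_Icc]; omega
      · intro i hi; rw [mem_Icc] at hi; rw [mem_Ico]; omega
      · intro s hs; rw [mem_Ico] at hs; omega
      · intro i hi; rw [mem_Icc] at hi; omega
      · intro s hs
        rw [mem_Ico] at hs
        have h1 : p - r * m + (r * m - s) = p - s := by omega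
        rw [h1, Nat.choose_symm (by omega : s ≤ p)]
    rw [Nat.mul_comm m r, hbin, hsplit, hhead]
    rw [Nat.add_comm]
    exact Nat.add_le_add_right (keyfact) _
  -- cast to ℝ
  have hfac : (0 : ℝ) < (m.factorial : ℝ) := by
    exact_mod_cast m.factorial_pos
  have hcast : (m : ℝ) - 1 = ((n : ℕ) : ℝ) := by
    rw [hn]
    push_cast [hm]
    ring
  have hBC : ((m : ℝ) - 1) ^ (p - r * m) * ∑ i ∈ Icc 1 (m * r),
        (p.choose (p - r * m + i) : ℝ) * ((m : ℝ) - 1) ^ i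
      = ((∑ i ∈ Icc 1 (m * r), p.choose (p - r * m + i) * n ^ (p - r * m + i) : ℕ) : ℝ) := by
    rw [hcast]
    push_cast
    rw [Finset.mul_sum]
    refine Finset.sum_congr rfl fun i _ => ?_
    rw [pow_add]
    ring
  have hkeyR : ((m : ℝ)) ^ p ≤ (stirlingAssoc r p m : ℝ) * (m.factorial : ℝ)
      + ((m : ℝ) - 1) ^ (p - r * m) * ∑ i ∈ Icc 1 (m * r),
        (p.choose (p - r * m + i) : ℝ) * ((m : ℝ) - 1) ^ i := by
    rw [hBC]
    exact_mod_cast hnat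
  rw [ge_iff_le]
  have heq : (m : ℝ) ^ p / (m.factorial : ℝ) -
      ((m : ℝ) - 1) ^ (p - r * m) / (m.factorial : ℝ) *
        ∑ i ∈ Finset.Icc 1 (m * r),
          (p.choose (p - r * m + i) : ℝ) * ((m : ℝ) - 1) ^ i
      = ((m : ℝ) ^ p - ((m : ℝ) - 1) ^ (p - r * m) *
          ∑ i ∈ Finset.Icc 1 (m * r),
            (p.choose (p - r * m + i) : ℝ) * ((m : ℝ) - 1) ^ i) / (m.factorial : ℝ) := by
    ring
  rw [heq, div_le_iff₀ hfac]
  linarith [hkeyR]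
end

section
/- Let m be a positive integer, r an integer with r ≥ 2, and p a natural number with p ≥ r·m. Then S_r(p,m) ≤ p! · r^{2(p−rm)} · (m−1+p−rm)! / (m! · (r!)^m · (p−rm)! · (r−1)^{2(p−rm)} · (m−1)!). -/
/-! Auxiliary machinery: from a family of disjoint blocks covering `Fin p`, together with
local permutations, we build an embedding `Fin p ↪ Fin p`. -/

/-- Data of an ordered partition of `Fin p` into `m` blocks of size at least `r`,
together with a permutation of `Fin r` for each block. -/
structure PartData (r p m : ℕ) : Type where
  B : Fin m → Finset (Fin p)
  τ : Fin m → Equiv.Perm (Fin r)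
  hdisj : ∀ i j, i ≠ j → Disjoint (B i) (B j)
  hsum : ∑ i, (B i).card = p
  hrB : ∀ i, r ≤ (B i).card
  hr : 1 ≤ r

namespace PartData

variable {r p m : ℕ} (d : PartData r p m)

/-- The sizes of the blocks. -/
def s : Fin m → ℕ := fun i => (d.B i).card

/-- The composition of `p` given by the block sizes. -/
def c : Composition p where
  blocks := List.ofFn d.s
  blocks_pos := by
    intro i hi
    rw [List.mem_ofFn] at hi
    obtain ⟨j, rfl⟩ := hi
    exact lt_of_lt_of_le d.hr (d.hrB j)
  blocks_sum := by rw [List.sum_ofFn]; exact d.hsum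

lemma length_c : d.c.length = m := by
  simp [c, Composition.length]

lemma blocksFun_c (i : Fin d.c.length) :
    d.c.blocksFun i = d.s (Fin.cast d.length_c i) := by
  simp only [Composition.blocksFun, c, List.get_ofFn]
  exact List.get_ofFn (f := d.s) ..

lemma r_le_blocksFun (i : Fin d.c.length) : r ≤ d.c.blocksFun i := by
  rw [d.blocksFun_c]; exact d.hrB _

/-- Permute the first `r` positions of block `i` using `d.τ`. -/
def ψ (i : Fin d.c.length) (j : Fin (d.c.blocksFun i)) : Fin (d.c.blocksFun i) :=
  if h : (j : ℕ) < r then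
    ⟨d.τ (Fin.cast d.length_c i) ⟨j, h⟩, lt_of_lt_of_le (Fin.is_lt _) (d.r_le_blocksFun i)⟩
  else j

lemma ψ_val_of_lt {i : Fin d.c.length} {j : Fin (d.c.blocksFun i)} (h : (j : ℕ) < r) :
    (d.ψ i j : ℕ) = (d.τ (Fin.cast d.length_c i) ⟨j, h⟩ : ℕ) := by
  simp [ψ, h]

lemma ψ_val_of_le {i : Fin d.c.length} {j : Fin (d.c.blocksFun i)} (h : r ≤ (j : ℕ)) :
    (d.ψ i j : ℕ) = j := by
  simp [ψ, Nat.not_lt.2 h]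

lemma ψ_inj (i : Fin d.c.length) : Function.Injective (d.ψ i) := by
  intro j j' hjj
  rcases Nat.lt_or_ge (j : ℕ) r with h | h <;> rcases Nat.lt_or_ge (j' : ℕ) r with h' | h'
  · have := congrArg Fin.val hjj
    simp only [d.ψ_val_of_lt h, d.ψ_val_of_lt h'] at this
    have h4 : (⟨(j : ℕ), h⟩ : Fin r) = ⟨(j' : ℕ), h'⟩ :=
      (d.τ (Fin.cast d.length_c i)).injective (Fin.ext this)
    have h5 : ((⟨(j : ℕ), h⟩ : Fin r) : ℕ) = ((⟨(j' : ℕ), h'⟩ : Fin r) : ℕ) := congrArg Fin.val h4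
    exact Fin.ext h5
  · exfalso
    have := congrArg Fin.val hjj
    simp only [d.ψ_val_of_lt h, d.ψ_val_of_le h'] at this
    have hlt : (d.τ (Fin.cast d.length_c i) ⟨j, h⟩ : ℕ) < r := Fin.is_lt _
    omega
  · exfalso
    have := congrArg Fin.val hjj
    simp only [d.ψ_val_of_le h, d.ψ_val_of_lt h'] at this
    have hlt : (d.τ (Fin.cast d.length_c i) ⟨j', h'⟩ : ℕ) < r := Fin.is_lt _
    omega
  · have := congrArg Fin.val hjj
    simp only [d.ψ_val_of_le h, d.ψ_val_of_le h'] at this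
    exact Fin.ext this

lemma card_B_cast (i : Fin d.c.length) :
    (d.B (Fin.cast d.length_c i)).card = d.c.blocksFun i := (d.blocksFun_c i).symm

/-- The enumeration of block `i`: the `j`-th element (after applying `ψ`). -/
def g (i : Fin d.c.length) (j : Fin (d.c.blocksFun i)) : Fin p :=
  (d.B (Fin.cast d.length_c i)).orderEmbOfFin (d.card_B_cast i) (d.ψ i j)

lemma g_mem (i : Fin d.c.length) (j : Fin (d.c.blocksFun i)) :
    d.g i j ∈ d.B (Fin.cast d.length_c i) :=
  Finset.orderEmbOfFin_mem _ _ _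

lemma g_inj (i : Fin d.c.length) : Function.Injective (d.g i) := by
  intro j j' h
  exact d.ψ_inj i ((Finset.orderEmbOfFin _ (d.card_B_cast i)).injective h)

lemma g_congr {i i' : Fin d.c.length} (h : i = i') {j : Fin (d.c.blocksFun i)}
    {j' : Fin (d.c.blocksFun i')} (hj : (j : ℕ) = (j' : ℕ)) : d.g i j = d.g i' j' := by
  subst h
  congr 1
  exact Fin.ext hj

lemma image_g (i : Fin d.c.length) :
    Finset.image (d.g i) Finset.univ = d.B (Fin.cast d.length_c i) := by
  apply Finset.eq_of_subset_of_card_le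
  · intro b hb
    rw [Finset.mem_image] at hb
    obtain ⟨j, _, rfl⟩ := hb
    exact d.g_mem i j
  · rw [Finset.card_image_of_injective _ (d.g_inj i), Finset.card_univ, Fintype.card_fin]
    exact (d.card_B_cast i).le

/-- The function `Fin p → Fin p` encoding the whole data. -/
def F : Fin p → Fin p := fun k => d.g (d.c.index k) (d.c.invEmbedding k)

lemma F_mem (k : Fin p) : d.F k ∈ d.B (Fin.cast d.length_c (d.c.index k)) := d.g_mem _ _

lemma F_embedding (i : Fin d.c.length) (j : Fin (d.c.blocksFun i)) :
    d.F (d.c.embedding i j) = d.g i j :=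
  d.g_congr (d.c.index_embedding i j) (d.c.invEmbedding_comp i j)

lemma F_inj : Function.Injective d.F := by
  intro k k' h
  by_cases hi : d.c.index k = d.c.index k'
  · have h2 : d.F k' = d.g (d.c.index k) ⟨(d.c.invEmbedding k' : ℕ), by rw [hi]; exact Fin.is_lt _⟩ :=
      d.g_congr hi.symm rfl
    have h3 := d.g_inj (d.c.index k) (h.trans h2)
    have hval : (d.c.invEmbedding k : ℕ) = (d.c.invEmbedding k' : ℕ) := by
      have := congrArg Fin.val h3
      simpa using this
    have hidx : (d.c.index k : ℕ) = (d.c.index k' : ℕ) := congrArg Fin.val hi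
    rw [← d.c.embedding_comp_inv k, ← d.c.embedding_comp_inv k']
    apply Fin.ext
    rw [Composition.coe_embedding, Composition.coe_embedding, hidx, hval]
  · exfalso
    have hne : Fin.cast d.length_c (d.c.index k) ≠ Fin.cast d.length_c (d.c.index k') := by
      intro hcontra
      have := congrArg Fin.val hcontra
      simp only [Fin.coe_cast] at this
      exact hi (Fin.ext this)
    have hdisj := d.hdisj _ _ hne
    exact Finset.disjoint_left.1 hdisj (d.F_mem k) (h ▸ d.F_mem k')

lemma F_injective_on_univ : Function.Injective d.F := d.F_inj

/-- Recover block `i` from `F` and the composition. -/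
lemma B_eq_image (i : Fin m) :
    d.B i = (Finset.univ.filter fun k : Fin p => ((d.c.index k : ℕ) = (i : ℕ))).image d.F := by
  have hcast : Fin.cast d.length_c (Fin.cast d.length_c.symm i) = i := Fin.ext rfl
  ext b
  simp only [Finset.mem_image, Finset.mem_filter, Finset.mem_univ, true_and]
  constructor
  · intro hb
    have hb' : b ∈ Finset.image (d.g (Fin.cast d.length_c.symm i)) Finset.univ := by
      rw [d.image_g, hcast]; exact hb
    rw [Finset.mem_image] at hb'
    obtain ⟨j, _, rfl⟩ := hb'
    refine ⟨d.c.embedding (Fin.cast d.length_c.symm i) j, ?_, ?_⟩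
    · rw [d.c.index_embedding]; rfl
    · exact d.F_embedding _ _
  · rintro ⟨k, hk, rfl⟩
    have : Fin.cast d.length_c (d.c.index k) = i := Fin.ext hk
    rw [← this]
    exact d.F_mem k

end PartData

open Finset in
/-- Build a `PartData` from a finpartition, a labeling of the parts, and local permutations. -/
noncomputable def mkData {r p m : ℕ} (hr : 1 ≤ r)
    (P : Finpartition (Finset.univ : Finset (Fin p)))
    (hPm : P.parts.card = m) (hPr : ∀ s ∈ P.parts, r ≤ s.card)
    (π : Equiv.Perm (Fin m)) (τ : Fin m → Equiv.Perm (Fin r)) : PartData r p m where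
  B := fun i => ((Finset.equivFinOfCardEq hPm).symm (π i) : Finset (Fin p))
  τ := τ
  hdisj := by
    intro i j hij
    have hne : ((Finset.equivFinOfCardEq hPm).symm (π i) : Finset (Fin p)) ≠
        ((Finset.equivFinOfCardEq hPm).symm (π j) : Finset (Fin p)) := by
      intro hcontra
      exact hij (π.injective ((Finset.equivFinOfCardEq hPm).symm.injective
        (Subtype.ext hcontra)))
    exact P.disjoint (Subtype.coe_prop _) (Subtype.coe_prop _) hne
  hsum := by
    have h1 : ∑ i : Fin m, ((Finset.equivFinOfCardEq hPm).symm (π i) : Finset (Fin p)).card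
        = ∑ t : P.parts, (t : Finset (Fin p)).card :=
      Equiv.sum_comp (π.trans (Finset.equivFinOfCardEq hPm).symm)
        (fun t => (t : Finset (Fin p)).card)
    rw [h1, Finset.sum_coe_sort P.parts (fun t => t.card), P.sum_card_parts]
    simp
  hrB := fun i => hPr _ (Subtype.coe_prop _)
  hr := hr

lemma mkData_B_injective {r p m : ℕ} (hr : 1 ≤ r)
    (P : Finpartition (Finset.univ : Finset (Fin p)))
    (hPm : P.parts.card = m) (hPr : ∀ s ∈ P.parts, r ≤ s.card)
    (π : Equiv.Perm (Fin m)) (τ : Fin m → Equiv.Perm (Fin r)) :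
    Function.Injective (mkData hr P hPm hPr π τ).B := by
  intro i j hij
  exact π.injective ((Finset.equivFinOfCardEq hPm).symm.injective (Subtype.ext hij))

lemma mkData_parts {r p m : ℕ} (hr : 1 ≤ r)
    (P : Finpartition (Finset.univ : Finset (Fin p)))
    (hPm : P.parts.card = m) (hPr : ∀ s ∈ P.parts, r ≤ s.card)
    (π : Equiv.Perm (Fin m)) (τ : Fin m → Equiv.Perm (Fin r)) :
    Finset.image (mkData hr P hPm hPr π τ).B Finset.univ = P.parts := by
  ext t
  simp only [Finset.mem_image, Finset.mem_univ, true_and]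
  constructor
  · rintro ⟨i, rfl⟩
    exact Subtype.coe_prop _
  · intro ht
    refine ⟨π.symm ((Finset.equivFinOfCardEq hPm) ⟨t, ht⟩), ?_⟩
    simp [mkData]

open Finset in
theorem key_count (m r p : ℕ) (hm : 0 < m) (hr : 2 ≤ r) (hp : r * m ≤ p) :
    stirlingAssoc r p m * (m.factorial * r.factorial ^ m) ≤
      p.factorial * (m - 1 + (p - r * m)).choose (p - r * m) := by
  classical
  set n := p - r * m with hn
  have hr1 : 1 ≤ r := by omega
  set Sub := {P : Finpartition (Finset.univ : Finset (Fin p)) //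
    P.parts.card = m ∧ ∀ s ∈ P.parts, r ≤ s.card} with hSub
  set T := (Fin p ↪ Fin p) × ↥(Finset.piAntidiag (Finset.univ : Finset (Fin m)) n) with hT
  -- the encoding map
  have main : ∀ (x : Sub × Equiv.Perm (Fin m) × (Fin m → Equiv.Perm (Fin r))), True := fun _ => trivial
  let data : Sub × Equiv.Perm (Fin m) × (Fin m → Equiv.Perm (Fin r)) → PartData r p m :=
    fun x => mkData hr1 x.1.1 x.1.2.1 x.1.2.2 x.2.1 x.2.2
  have hmem : ∀ x, (fun i => ((data x).B i).card - r) ∈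
      Finset.piAntidiag (Finset.univ : Finset (Fin m)) n := by
    intro x
    rw [Finset.mem_piAntidiag]
    refine ⟨?_, fun i _ => Finset.mem_univ i⟩
    have hle : ∀ i ∈ (Finset.univ : Finset (Fin m)), r ≤ ((data x).B i).card :=
      fun i _ => (data x).hrB i
    rw [Finset.sum_tsub_distrib _ hle, (data x).hsum]
    simp [hn, Finset.card_univ, mul_comm]
  let Φ : Sub × Equiv.Perm (Fin m) × (Fin m → Equiv.Perm (Fin r)) → T :=
    fun x => (⟨(data x).F, (data x).F_inj⟩, ⟨fun i => ((data x).B i).card - r, hmem x⟩)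
  have hΦ : Function.Injective Φ := by
    rintro ⟨⟨P₁, hm₁, hr₁⟩, π₁, τ₁⟩ ⟨⟨P₂, hm₂, hr₂⟩, π₂, τ₂⟩ h
    set d₁ := data (⟨⟨P₁, hm₁, hr₁⟩, π₁, τ₁⟩) with hd₁
    set d₂ := data (⟨⟨P₂, hm₂, hr₂⟩, π₂, τ₂⟩) with hd₂
    have hF : d₁.F = d₂.F := by
      have := congrArg (fun y : T => (y.1 : Fin p → Fin p)) h
      exact this
    have ha : ∀ i, (d₁.B i).card - r = (d₂.B i).card - r := by
      intro i
      have := congrArg (fun y : T => (y.2 : Fin m → ℕ) i) h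
      simpa using this
    have hs : d₁.s = d₂.s := by
      funext i
      have h1 := (d₁.hrB i)
      have h2 := (d₂.hrB i)
      have := ha i
      simp only [PartData.s]
      omega
    have hc : d₁.c = d₂.c := by
      have : d₁.c.blocks = d₂.c.blocks := by
        show List.ofFn d₁.s = List.ofFn d₂.s
        rw [hs]
      cases hcc₁ : d₁.c
      cases hcc₂ : d₂.c
      simp_all [PartData.c]
    have hB : ∀ i, d₁.B i = d₂.B i := by
      intro i
      rw [d₁.B_eq_image i, d₂.B_eq_image i, hF]
      congr 1
      apply Finset.filter_congr
      intro k _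
      rw [hc]
    have hP : P₁ = P₂ := by
      apply Finpartition.ext
      rw [← mkData_parts hr1 P₁ hm₁ hr₁ π₁ τ₁, ← mkData_parts hr1 P₂ hm₂ hr₂ π₂ τ₂]
      have : d₁.B = d₂.B := funext hB
      exact congrArg (fun f => Finset.image f Finset.univ) this
    subst hP
    have hπ : π₁ = π₂ := by
      apply Equiv.ext
      intro i
      have := hB i
      have h2 : ((Finset.equivFinOfCardEq hm₁).symm (π₁ i) : Finset (Fin p)) =
          ((Finset.equivFinOfCardEq hm₁).symm (π₂ i) : Finset (Fin p)) := this
      exact (Finset.equivFinOfCardEq hm₁).symm.injective (Subtype.ext h2)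
    subst hπ
    have hτ : τ₁ = τ₂ := by
      funext i
      apply Equiv.ext
      intro j
      -- evaluate F at the embedding of position j in block i
      have hjb₁ : (j : ℕ) < d₁.c.blocksFun (Fin.cast d₁.length_c.symm i) :=
        lt_of_lt_of_le j.is_lt (d₁.r_le_blocksFun _)
      have hjb₂ : (j : ℕ) < d₂.c.blocksFun (Fin.cast d₂.length_c.symm i) :=
        lt_of_lt_of_le j.is_lt (d₂.r_le_blocksFun _)
      set k₁ := d₁.c.embedding (Fin.cast d₁.length_c.symm i) ⟨j, hjb₁⟩ with hk₁
      set k₂ := d₂.c.embedding (Fin.cast d₂.length_c.symm i) ⟨j, hjb₂⟩ with hk₂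
      have hkk : k₁ = k₂ := by
        apply Fin.ext
        rw [hk₁, hk₂, Composition.coe_embedding, Composition.coe_embedding]
        simp only [hc]
        rfl
      have hv₁ : d₁.F k₁ = d₁.g _ ⟨j, hjb₁⟩ := d₁.F_embedding _ _
      have hv₂ : d₂.F k₂ = d₂.g _ ⟨j, hjb₂⟩ := d₂.F_embedding _ _
      have hgg : d₁.g (Fin.cast d₁.length_c.symm i) ⟨j, hjb₁⟩ =
          d₂.g (Fin.cast d₂.length_c.symm i) ⟨j, hjb₂⟩ := by
        rw [← hv₁, ← hv₂, hF, hkk]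
      -- unfold g to sorted lists
      have hBi : d₁.B i = d₂.B i := hB i
      rw [PartData.g, PartData.g] at hgg
      rw [Finset.orderEmbOfFin_apply, Finset.orderEmbOfFin_apply] at hgg
      have hlen₁ : ((d₁.B i).sort (· ≤ ·)).length =
          d₁.c.blocksFun (Fin.cast d₁.length_c.symm i) := by
        rw [Finset.length_sort]; exact d₁.card_B_cast (Fin.cast d₁.length_c.symm i)
      have hlen₂ : ((d₂.B i).sort (· ≤ ·)).length =
          d₂.c.blocksFun (Fin.cast d₂.length_c.symm i) := by
        rw [Finset.length_sort]; exact d₂.card_B_cast (Fin.cast d₂.length_c.symm i)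
      have hv₁' : ((d₁.ψ (Fin.cast d₁.length_c.symm i) ⟨j, hjb₁⟩ : Fin _) : ℕ) <
          ((d₁.B i).sort (· ≤ ·)).length := by rw [hlen₁]; exact Fin.is_lt _
      have hv₂' : ((d₂.ψ (Fin.cast d₂.length_c.symm i) ⟨j, hjb₂⟩ : Fin _) : ℕ) <
          ((d₂.B i).sort (· ≤ ·)).length := by rw [hlen₂]; exact Fin.is_lt _
      have h1 : ((d₁.B i).sort (· ≤ ·))[((d₁.ψ (Fin.cast d₁.length_c.symm i) ⟨j, hjb₁⟩ : Fin _) : ℕ)]? =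
          ((d₂.B i).sort (· ≤ ·))[((d₂.ψ (Fin.cast d₂.length_c.symm i) ⟨j, hjb₂⟩ : Fin _) : ℕ)]? := by
        rw [List.getElem?_eq_getElem hv₁', List.getElem?_eq_getElem hv₂']
        exact congrArg Option.some hgg
      have hBs : (d₂.B i).sort (· ≤ ·) = (d₁.B i).sort (· ≤ ·) := by rw [hBi]
      rw [hBs] at h1
      have hnodup : ((d₁.B i).sort (· ≤ ·)).Nodup := Finset.sort_nodup _ _
      have hvals := (List.getElem?_inj hv₁' hnodup).1 h1
      have hψ₁ : ((d₁.ψ (Fin.cast d₁.length_c.symm i) ⟨j, hjb₁⟩ : Fin _) : ℕ) =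
          (τ₁ i ⟨(j : ℕ), j.is_lt⟩ : ℕ) := d₁.ψ_val_of_lt j.is_lt
      have hψ₂ : ((d₂.ψ (Fin.cast d₂.length_c.symm i) ⟨j, hjb₂⟩ : Fin _) : ℕ) =
          (τ₂ i ⟨(j : ℕ), j.is_lt⟩ : ℕ) := d₂.ψ_val_of_lt j.is_lt
      rw [hψ₁, hψ₂] at hvals
      exact Fin.ext hvals
    subst hτ
    rfl
  -- count
  have hcard := Nat.card_le_card_of_injective Φ hΦ
  have hD : Nat.card (Sub × Equiv.Perm (Fin m) × (Fin m → Equiv.Perm (Fin r)))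
      = stirlingAssoc r p m * (m.factorial * r.factorial ^ m) := by
    rw [Nat.card_prod, Nat.card_prod]
    congr 1
    congr 1
    · rw [Nat.card_eq_fintype_card, Fintype.card_perm, Fintype.card_fin]
    · rw [Nat.card_eq_fintype_card, Fintype.card_fun, Fintype.card_perm, Fintype.card_fin,
        Fintype.card_fin]
  have hAnti : (Finset.piAntidiag (Finset.univ : Finset (Fin m)) n).card
      = (m - 1 + n).choose n := by
    rw [← Finset.map_sym_eq_piAntidiag, Finset.card_map, Finset.sym_univ, Finset.card_univ,
      Sym.card_sym_eq_multichoose, Fintype.card_fin, Nat.multichoose_eq]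
    congr 1
    omega
  have hTcard : Nat.card T = p.factorial * (m - 1 + n).choose n := by
    rw [hT, Nat.card_eq_fintype_card, Fintype.card_prod, Fintype.card_embedding_eq,
      Fintype.card_fin, Nat.descFactorial_self, Fintype.card_coe, hAnti]
  rw [hD, hTcard] at hcard
  exact hcard

theorem stmt_19 (m : ℕ) (hm : 0 < m) (r : ℕ) (hr : 2 ≤ r) (p : ℕ) (hp : r * m ≤ p) :
    (stirlingAssoc r p m : ℝ) ≤
      (p.factorial : ℝ) * (r : ℝ) ^ (2 * (p - r * m)) *
          ((m - 1 + (p - r * m)).factorial : ℝ) /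
        ((m.factorial : ℝ) * (r.factorial : ℝ) ^ m * ((p - r * m).factorial : ℝ) *
          ((r : ℝ) - 1) ^ (2 * (p - r * m)) * ((m - 1).factorial : ℝ)) := by
  set n := p - r * m with hn
  have hkey := key_count m r p hm hr hp
  have hr1 : (1 : ℝ) ≤ (r : ℝ) - 1 := by
    have : (2 : ℝ) ≤ (r : ℝ) := by exact_mod_cast hr
    linarith
  have hrpos : (0 : ℝ) < (r : ℝ) - 1 := by linarith
  have hpow : ((r : ℝ) - 1) ^ (2 * n) ≤ (r : ℝ) ^ (2 * n) := by
    apply pow_le_pow_left₀ (le_of_lt hrpos)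
    linarith
  -- positivity of pieces
  have hmf : (0 : ℝ) < (m.factorial : ℝ) := by exact_mod_cast m.factorial_pos
  have hrf : (0 : ℝ) < (r.factorial : ℝ) ^ m := by positivity
  have hnf : (0 : ℝ) < (n.factorial : ℝ) := by exact_mod_cast n.factorial_pos
  have hm1f : (0 : ℝ) < ((m - 1).factorial : ℝ) := by exact_mod_cast (m - 1).factorial_pos
  have hpowpos : (0 : ℝ) < ((r : ℝ) - 1) ^ (2 * n) := by positivity
  have hdenom : (0 : ℝ) < (m.factorial : ℝ) * (r.factorial : ℝ) ^ m * (n.factorial : ℝ) *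
      ((r : ℝ) - 1) ^ (2 * n) * ((m - 1).factorial : ℝ) := by positivity
  rw [le_div_iff₀ hdenom]
  -- cast key inequality
  have hkeyR : (stirlingAssoc r p m : ℝ) * ((m.factorial : ℝ) * (r.factorial : ℝ) ^ m) ≤
      (p.factorial : ℝ) * ((m - 1 + n).choose n : ℝ) := by
    exact_mod_cast hkey
  have hch : ((m - 1 + n).choose n : ℝ) * (n.factorial : ℝ) * ((m - 1).factorial : ℝ)
      = ((m - 1 + n).factorial : ℝ) := by
    have h1 : (m - 1 + n).choose n * n.factorial * (m - 1 + n - n).factorial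
        = (m - 1 + n).factorial := Nat.choose_mul_factorial_mul_factorial (Nat.le_add_left n (m - 1))
    have h2 : m - 1 + n - n = m - 1 := by omega
    rw [h2] at h1
    exact_mod_cast h1
  have hSnonneg : (0 : ℝ) ≤ (stirlingAssoc r p m : ℝ) := by positivity
  have hpf : (0 : ℝ) ≤ (p.factorial : ℝ) := by positivity
  calc (stirlingAssoc r p m : ℝ) * ((m.factorial : ℝ) * (r.factorial : ℝ) ^ m *
        (n.factorial : ℝ) * ((r : ℝ) - 1) ^ (2 * n) * ((m - 1).factorial : ℝ))
      = ((stirlingAssoc r p m : ℝ) * ((m.factorial : ℝ) * (r.factorial : ℝ) ^ m)) *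
        ((n.factorial : ℝ) * ((m - 1).factorial : ℝ)) * ((r : ℝ) - 1) ^ (2 * n) := by ring
    _ ≤ ((p.factorial : ℝ) * ((m - 1 + n).choose n : ℝ)) *
        ((n.factorial : ℝ) * ((m - 1).factorial : ℝ)) * ((r : ℝ) - 1) ^ (2 * n) := by
        apply mul_le_mul_of_nonneg_right
        apply mul_le_mul_of_nonneg_right hkeyR
        · positivity
        · positivity
    _ = (p.factorial : ℝ) * ((m - 1 + n).factorial : ℝ) * ((r : ℝ) - 1) ^ (2 * n) := by
        rw [← hch]; ring
    _ ≤ (p.factorial : ℝ) * ((m - 1 + n).factorial : ℝ) * (r : ℝ) ^ (2 * n) := by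
        apply mul_le_mul_of_nonneg_left hpow
        positivity
    _ = (p.factorial : ℝ) * (r : ℝ) ^ (2 * n) * ((m - 1 + n).factorial : ℝ) := by ring
end
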